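/- Let $n, k, j$ be non-negative integers satisfying $2k \leq n$ and $j < k$. Then $\sum_{i=0}^{k-j} (-1)^{i}\,\binom{n-2k+i+1}{i}\,\binom{n-2j+1}{k-i-j} = \binom{2k-2j-1}{k-j}$, where the sum is computed in the integers. -/

import Mathlib

open PowerSeries Finset

lemma coeff_one_sub_pow (M p : ℕ) :
    (PowerSeries.coeff (R := ℤ) p) ((1 - (PowerSeries.X : ℤ⟦X⟧)) ^ M) = (-1) ^ p * M.choose p := by
  rw [sub_eq_add_neg, add_comm, add_pow]
  rw [map_sum]
  have : ∀ i ∈ Finset.range (M + 1),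
      (PowerSeries.coeff (R := ℤ) p) ((-X : ℤ⟦X⟧) ^ i * 1 ^ (M - i) * (M.choose i : ℤ⟦X⟧))
        = if i = p then (-1) ^ p * (M.choose p : ℤ) else 0 := by
    intro i _
    have hrw : ((-X : ℤ⟦X⟧) ^ i * 1 ^ (M - i) * (M.choose i : ℤ⟦X⟧))
        = PowerSeries.C (R := ℤ) ((-1) ^ i * (M.choose i : ℤ)) * X ^ i := by
      rw [map_mul, map_pow, map_neg, map_one, map_natCast]
      ring
    rw [hrw, PowerSeries.coeff_C_mul, PowerSeries.coeff_X_pow]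
    by_cases h : i = p
    · subst h; simp
    · rw [if_neg (fun hh => h hh.symm), if_neg h, mul_zero]
  rw [Finset.sum_congr rfl this, Finset.sum_ite_eq' (Finset.range (M + 1)) p]
  split_ifs with h
  · rfl
  · rw [Finset.mem_range, not_lt] at h
    rw [Nat.choose_eq_zero_of_lt (by omega)]
    simp

lemma key (d T p : ℕ) :
    (∑ i ∈ Finset.range (p + 1),
      (-1 : ℤ) ^ i * ((d + i).choose i) * ((d + 1 + T).choose (p - i)))
      = (T.choose p : ℤ) := by
  have H : (PowerSeries.mk fun n => ((d + n).choose d : ℤ)) * (1 - X) ^ (d + 1) = 1 :=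
    PowerSeries.mk_add_choose_mul_one_sub_pow_eq_one ℤ d
  have H2 : (PowerSeries.mk fun n => ((d + n).choose d : ℤ)) * (1 - X) ^ (d + 1 + T)
      = (1 - X) ^ T := by
    rw [pow_add, ← mul_assoc, H, one_mul]
  have H3 := congrArg (PowerSeries.coeff (R := ℤ) p) H2
  rw [PowerSeries.coeff_mul, coeff_one_sub_pow] at H3
  rw [Finset.Nat.sum_antidiagonal_eq_sum_range_succ
    (f := fun a b => (PowerSeries.coeff (R := ℤ) a) (PowerSeries.mk fun n => ((d + n).choose d : ℤ))
      * (PowerSeries.coeff (R := ℤ) b) ((1 - X) ^ (d + 1 + T)))] at H3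
  simp only [PowerSeries.coeff_mk, coeff_one_sub_pow] at H3
  have H4 := congrArg (fun x => (-1 : ℤ) ^ p * x) H3
  simp only [Finset.mul_sum] at H4
  rw [← mul_assoc, ← mul_pow] at H4
  simp only [neg_mul_neg, one_mul, one_pow] at H4
  rw [← H4]
  apply Finset.sum_congr rfl
  intro i hi
  rw [Finset.mem_range] at hi
  have hip : i ≤ p := by omega
  have h1 : ((d + i).choose d) = ((d + i).choose i) := by
    rw [← Nat.choose_symm (by omega : i ≤ d + i)]
    congr 1
    omega
  have h2 : ((-1 : ℤ)) ^ p * ((-1) ^ (p - i)) = (-1) ^ i := by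
    rw [← pow_add]
    have hpi : p + (p - i) = 2 * (p - i) + i := by omega
    rw [hpi, pow_add, pow_mul]
    simp
  rw [h1, ← h2]
  ring

theorem stmt_2 (n k j : ℕ) (h2k : 2 * k ≤ n) (hjk : j < k) :
    (∑ i ∈ Finset.range (k - j + 1),
      (-1 : ℤ) ^ i * (Nat.choose (n - 2 * k + i + 1) i) *
        (Nat.choose (n - 2 * j + 1) (k - i - j)))
      = Nat.choose (2 * k - 2 * j - 1) (k - j) := by
  have := key (n - 2 * k + 1) (2 * k - 2 * j - 1) (k - j)
  have e2 : n - 2 * k + 1 + 1 + (2 * k - 2 * j - 1) = n - 2 * j + 1 := by omega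
  rw [e2] at this
  rw [← this]
  apply Finset.sum_congr rfl
  intro i hi
  rw [Finset.mem_range] at hi
  have e1 : n - 2 * k + 1 + i = n - 2 * k + i + 1 := by omega
  have e3 : k - j - i = k - i - j := by omega
  rw [e1, e3]
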